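/- Let K be a compact convex metrizable subset of a locally convex space and let f : K → (0,∞] be a lower semicontinuous affine function that is the pointwise supremum of a set D of continuous affine functions K → (0,∞). If D is directed upward, then f is the pointwise supremum of an increasing sequence from D. -/
import Mathlib


open scoped ENNReal

private lemma ofReal_le_of_rat (r : ℝ) (S : ℝ≥0∞)
    (h : ∀ q : ℚ, (q : ℝ) < r → ENNReal.ofReal q ≤ S) : ENNReal.ofReal r ≤ S := by
  by_contra hc
  push_neg at hc
  have hS : S ≠ ⊤ := hc.ne_top
  have h1 : S.toReal < r := (ENNReal.lt_ofReal_iff_toReal_lt hS).mp hc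
  obtain ⟨q, hq1, hq2⟩ := exists_rat_btwn h1
  exact absurd (h q hq2) (not_le.mpr ((ENNReal.lt_ofReal_iff_toReal_lt hS).mpr hq1))

/-- On a compact convex metrizable set `K`, a lower semicontinuous affine function
`f : K → (0,∞]` which is the pointwise supremum of an upward-directed set `D` of strictly
positive continuous affine functions is the pointwise supremum of an increasing sequence
from `D`. -/
theorem stmt_8 {E : Type*} [AddCommGroup E] [Module ℝ E] [TopologicalSpace E]
    [LocallyConvexSpace ℝ E]
    (K : Set E) (hKcpt : IsCompact K) (hKconv : Convex ℝ K) (hKne : K.Nonempty)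
    (hKmetr : TopologicalSpace.MetrizableSpace K)
    (f : E → ℝ≥0∞)
    (hflsc : LowerSemicontinuousOn f K)
    (hfpos : ∀ x ∈ K, 0 < f x)
    (hfaff : ∀ x ∈ K, ∀ y ∈ K, ∀ a b : ℝ, 0 ≤ a → 0 ≤ b → a + b = 1 →
      f (a • x + b • y) = ENNReal.ofReal a * f x + ENNReal.ofReal b * f y)
    (D : Set (E → ℝ))
    (hD : ∀ g ∈ D, ContinuousOn g K ∧ (∀ x ∈ K, 0 < g x) ∧
      ∀ x ∈ K, ∀ y ∈ K, ∀ a b : ℝ, 0 ≤ a → 0 ≤ b → a + b = 1 →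
        g (a • x + b • y) = a * g x + b * g y)
    (hsup : ∀ x ∈ K, f x = ⨆ g ∈ D, ENNReal.ofReal (g x))
    (hdir : ∀ g₁ ∈ D, ∀ g₂ ∈ D, ∃ g₃ ∈ D, ∀ x ∈ K, g₁ x ≤ g₃ x ∧ g₂ x ≤ g₃ x) :
    ∃ g : ℕ → E → ℝ, (∀ n, g n ∈ D) ∧
      (∀ n, ∀ x ∈ K, g n x ≤ g (n + 1) x) ∧
      ∀ x ∈ K, f x = ⨆ n, ENNReal.ofReal (g n x) := by
  classical
  haveI : CompactSpace K := isCompact_iff_compactSpace.mp hKcpt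
  letI : MetricSpace K := TopologicalSpace.metrizableSpaceMetric K
  haveI : SecondCountableTopology K := inferInstance
  obtain ⟨b, hbc, -, hbasis⟩ := TopologicalSpace.exists_countable_basis K
  -- the selection predicate
  set P : Set K → ℚ → Prop := fun U q => ∃ g, g ∈ D ∧ ∀ y : K, y ∈ U → (q : ℝ) < g y with hP
  set sel : Set K → ℚ → (E → ℝ) := fun U q => if h : P U q then h.choose else 0 with hsel
  have hselD : ∀ U q, P U q → sel U q ∈ D ∧ ∀ y : K, y ∈ U → (q : ℝ) < sel U q y := by
    intro U q h
    simp only [hsel, dif_pos h]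
    exact ⟨h.choose_spec.1, h.choose_spec.2⟩
  set D₀ : Set (E → ℝ) := (fun p : Set K × ℚ => sel p.1 p.2) '' {p | p.1 ∈ b ∧ P p.1 p.2}
    with hD₀
  have hD₀c : D₀.Countable := by
    apply Set.Countable.image
    exact (hbc.prod Set.countable_univ).mono (fun p hp => Set.mk_mem_prod hp.1 (Set.mem_univ p.2))
  have hD₀D : D₀ ⊆ D := by
    rintro g ⟨⟨U, q⟩, ⟨hU, hPq⟩, rfl⟩
    exact (hselD U q hPq).1
  -- key step : sup over D₀ dominates every element of D
  have hkey : ∀ g ∈ D, ∀ x (hx : x ∈ K),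
      ENNReal.ofReal (g x) ≤ ⨆ g' ∈ D₀, ENNReal.ofReal (g' x) := by
    intro g hg x hx
    apply ofReal_le_of_rat
    intro q hq
    set V : Set K := {y : K | (q : ℝ) < g y} with hV
    have hVopen : IsOpen V := by
      have : Continuous (K.restrict g) := continuousOn_iff_continuous_restrict.mp (hD g hg).1
      exact isOpen_Ioi.preimage this
    have hxV : (⟨x, hx⟩ : K) ∈ V := hq
    obtain ⟨U, hUb, hxU, hUV⟩ := hbasis.exists_subset_of_mem_open hxV hVopen
    have hPUq : P U q := ⟨g, hg, fun y hy => hUV hy⟩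
    have hmem : sel U q ∈ D₀ := ⟨⟨U, q⟩, ⟨hUb, hPUq⟩, rfl⟩
    calc ENNReal.ofReal q ≤ ENNReal.ofReal (sel U q x) :=
          ENNReal.ofReal_le_ofReal ((hselD U q hPUq).2 ⟨x, hx⟩ hxU).le
      _ ≤ ⨆ g' ∈ D₀, ENNReal.ofReal (g' x) := le_iSup₂ (f := fun g' _ => ENNReal.ofReal (g' x))
          (sel U q) hmem
  have hsup₀ : ∀ x ∈ K, f x = ⨆ g ∈ D₀, ENNReal.ofReal (g x) := by
    intro x hx
    apply le_antisymm
    · rw [hsup x hx]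
      exact iSup₂_le fun g hg => hkey g hg x hx
    · refine iSup₂_le fun g hg => ?_
      rw [hsup x hx]
      exact le_iSup₂ (f := fun g' _ => ENNReal.ofReal (g' x)) g (hD₀D hg)
  -- D₀ is nonempty
  have hD₀ne : D₀.Nonempty := by
    rcases D₀.eq_empty_or_nonempty with h | h
    · exfalso
      obtain ⟨x, hx⟩ := hKne
      have := hfpos x hx
      rw [hsup₀ x hx, h] at this
      simp at this
    · exact h
  obtain ⟨u, hu⟩ := Set.Countable.exists_eq_range hD₀c hD₀ne
  have huD₀ : ∀ n, u n ∈ D₀ := fun n => hu ▸ Set.mem_range_self n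
  have huD : ∀ n, u n ∈ D := fun n => hD₀D (huD₀ n)
  -- build the increasing sequence
  choose! T hTD hTle using hdir
  set g : ℕ → E → ℝ := fun n => Nat.rec (u 0) (fun n gn => T gn (u (n + 1))) n with hg
  have hgD : ∀ n, g n ∈ D := by
    intro n
    induction n with
    | zero => exact huD 0
    | succ n ih => exact hTD _ ih _ (huD (n + 1))
  have hmono : ∀ n, ∀ x ∈ K, g n x ≤ g (n + 1) x := fun n x hx =>
    (hTle _ (hgD n) _ (huD (n + 1)) x hx).1
  have hule : ∀ n, ∀ x ∈ K, u n x ≤ g n x := by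
    intro n x hx
    cases n with
    | zero => exact le_refl _
    | succ n => exact (hTle _ (hgD n) _ (huD (n + 1)) x hx).2
  refine ⟨g, hgD, hmono, fun x hx => ?_⟩
  apply le_antisymm
  · rw [hsup₀ x hx, hu, iSup_range]
    exact iSup_le fun n => le_trans
      (ENNReal.ofReal_le_ofReal (hule n x hx)) (le_iSup (fun n => ENNReal.ofReal (g n x)) n)
  · refine iSup_le fun n => ?_
    rw [hsup x hx]
    exact le_iSup₂ (f := fun g' _ => ENNReal.ofReal (g' x)) (g n) (hgD n)
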